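/- Time dilation formula: let F be an ordered field, d ≥ 2, and P : F^d → F^d an affine bijection with μ²₁(P(x)-P(y)) = μ²₁(x-y) for all x, y (a Poincaré transformation). Let x, y ∈ F^d lie on the time axis (x₂=...=x_d = 0 and y₂=...=y_d = 0), let x' = P(x), y' = P(y), and suppose x ≠ y. If v ∈ F is defined by the squared-speed relation ((x'₂-y'₂)²+...+(x'_d-y'_d)²) = v·(x'₁-y'₁)² (noting x'₁ ≠ y'₁), then v ≠ 1 and (x'₁-y'₁)² = (x₁-y₁)²/(1-v). -/

import Mathlib

/-- The Minkowski quadratic form `μ²₁` on `F^d`, `d = d' + 2 ≥ 2`. -/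
def mink {F : Type*} [Field F] [LinearOrder F] [IsStrictOrderedRing F] {d : ℕ} (x : Fin (d + 2) → F) : F :=
  x 0 ^ 2 - ∑ i ∈ Finset.univ.erase 0, x i ^ 2

/-- Time dilation: let `P` be a Poincaré transformation of `F^d` (an affine bijection
preserving the Minkowski squared interval of differences), let `x ≠ y` be points on the time
axis, `x' = P x`, `y' = P y`, and let `v` satisfy the squared-speed relation
`Σᵢ≥₂ (x'ᵢ - y'ᵢ)² = v·(x'₁ - y'₁)²`. Then `v ≠ 1` and
`(x'₁ - y'₁)² = (x₁ - y₁)² / (1 - v)`. -/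
theorem stmt_19 {F : Type*} [Field F] [LinearOrder F] [IsStrictOrderedRing F] {d : ℕ}
    (P : (Fin (d + 2) → F) → (Fin (d + 2) → F))
    (hbij : Function.Bijective P)
    (haff : ∃ (L : (Fin (d + 2) → F) →ₗ[F] (Fin (d + 2) → F)) (b : Fin (d + 2) → F),
        ∀ x, P x = L x + b)
    (hP : ∀ x y, mink (P x - P y) = mink (x - y))
    (x y : Fin (d + 2) → F)
    (hx : ∀ i, i ≠ 0 → x i = 0) (hy : ∀ i, i ≠ 0 → y i = 0) (hxy : x ≠ y)
    (v : F)
    (hv : ∑ i ∈ Finset.univ.erase 0, (P x i - P y i) ^ 2 = v * (P x 0 - P y 0) ^ 2) :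
    v ≠ 1 ∧ (P x 0 - P y 0) ^ 2 = (x 0 - y 0) ^ 2 / (1 - v) := by
  have hx0 : x 0 ≠ y 0 := by
    intro h
    exact hxy (funext fun i => by
      rcases eq_or_ne i 0 with rfl | hi
      · exact h
      · rw [hx i hi, hy i hi])
  have hmxy : mink (x - y) = (x 0 - y 0) ^ 2 := by
    unfold mink
    have : ∑ i ∈ Finset.univ.erase 0, ((x - y) i) ^ 2 = 0 := by
      apply Finset.sum_eq_zero
      intro i hi
      have hi0 : i ≠ 0 := (Finset.mem_erase.mp hi).1
      simp [hx i hi0, hy i hi0]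
    rw [this]
    show (x 0 - y 0) ^ 2 - 0 = _
    ring
  have key : (1 - v) * (P x 0 - P y 0) ^ 2 = (x 0 - y 0) ^ 2 := by
    have h1 := hP x y
    rw [hmxy] at h1
    unfold mink at h1
    have h2 : ∑ i ∈ Finset.univ.erase 0, ((P x - P y) i) ^ 2
        = v * (P x 0 - P y 0) ^ 2 := by simpa using hv
    rw [h2] at h1
    have : (P x - P y) 0 = P x 0 - P y 0 := rfl
    rw [this] at h1
    linarith
  have hs : x 0 - y 0 ≠ 0 := sub_ne_zero.mpr hx0
  have hpos : (0:F) < (x 0 - y 0) ^ 2 := by positivity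
  have h1v : 1 - v ≠ 0 := by
    intro h
    rw [h, zero_mul] at key
    exact absurd key.symm (ne_of_gt hpos)
  refine ⟨fun h => h1v (by rw [h]; ring), ?_⟩
  field_simp
  linarith [key]
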